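/- The trigonometric degree-2 Bernstein functions b₀(x) = (1 − cos(ω(1−x)))/(1 − cos ω), b₁(x) = (cos(ω(1−x)) + cos(ωx) − cos ω − 1)/(1 − cos ω), b₂(x) = (1 − cos(ωx))/(1 − cos ω) on [0,1], with 0 < ω < π, sum to 1 on [0,1], are each nonnegative on [0,1], and satisfy the end-point conditions b₀(0) = 1, b₀(1) = b₀'(1) = 0, b₂(1) = 1, b₂(0) = b₂'(0) = 0. -/

import Mathlib

open Real

/-- The trigonometric degree-2 Bernstein functions on [0,1] with 0 < ω < π sum to 1,
are nonnegative on [0,1], and satisfy the end-point conditions b₀(0) = 1,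
b₀(1) = b₀'(1) = 0, b₂(1) = 1, b₂(0) = b₂'(0) = 0. -/
theorem trig_bernstein_degree_two (ω : ℝ) (hω0 : 0 < ω) (hωπ : ω < π)
    (b₀ b₁ b₂ : ℝ → ℝ)
    (hb₀ : b₀ = fun x => (1 - Real.cos (ω * (1 - x))) / (1 - Real.cos ω))
    (hb₁ : b₁ = fun x =>
      (Real.cos (ω * (1 - x)) + Real.cos (ω * x) - Real.cos ω - 1) / (1 - Real.cos ω))
    (hb₂ : b₂ = fun x => (1 - Real.cos (ω * x)) / (1 - Real.cos ω)) :
    (∀ x ∈ Set.Icc (0 : ℝ) 1, b₀ x + b₁ x + b₂ x = 1) ∧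
    (∀ x ∈ Set.Icc (0 : ℝ) 1, 0 ≤ b₀ x ∧ 0 ≤ b₁ x ∧ 0 ≤ b₂ x) ∧
    b₀ 0 = 1 ∧ b₀ 1 = 0 ∧ deriv b₀ 1 = 0 ∧
    b₂ 1 = 1 ∧ b₂ 0 = 0 ∧ deriv b₂ 0 = 0 := by
  have hclt : Real.cos ω < 1 := by
    have := Real.cos_lt_cos_of_nonneg_of_le_pi (le_refl 0) hωπ.le hω0
    simpa using this
  have hc : 0 < 1 - Real.cos ω := by linarith
  subst hb₀ hb₁ hb₂
  refine ⟨?_, ?_, ?_, ?_, ?_, ?_, ?_, ?_⟩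
  · intro x _
    field_simp
    ring
  · intro x hx
    obtain ⟨hx0, hx1⟩ := hx
    refine ⟨?_, ?_, ?_⟩
    · exact div_nonneg (by have := Real.cos_le_one (ω * (1 - x)); linarith) hc.le
    · apply div_nonneg _ hc.le
      have hkey : Real.cos (ω * (1 - x)) + Real.cos (ω * x) =
          2 * Real.cos (ω / 2) * Real.cos (ω * (1 - 2 * x) / 2) := by
        rw [Real.cos_add_cos]; ring_nf
      have hcos2 : Real.cos ω + 1 = 2 * Real.cos (ω / 2) ^ 2 := by
        have := Real.cos_sq (ω / 2)
        have h2 : 2 * (ω / 2) = ω := by ring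
        rw [h2] at this
        linarith
      have hpos : 0 < Real.cos (ω / 2) :=
        Real.cos_pos_of_mem_Ioo ⟨by linarith [Real.pi_pos], by linarith⟩
      have hle : Real.cos (ω / 2) ≤ Real.cos (ω * (1 - 2 * x) / 2) := by
        have habs : |ω * (1 - 2 * x) / 2| ≤ ω / 2 := by
          rw [abs_div, abs_mul, abs_of_pos hω0, abs_of_pos (by norm_num : (0:ℝ) < 2)]
          have : |1 - 2 * x| ≤ 1 := by
            rw [abs_le]; constructor <;> linarith
          calc ω * |1 - 2 * x| / 2 ≤ ω * 1 / 2 := by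
                apply div_le_div_of_nonneg_right ?_ (by norm_num)
                exact mul_le_mul_of_nonneg_left this hω0.le
            _ = ω / 2 := by ring
        have := Real.cos_le_cos_of_nonneg_of_le_pi (abs_nonneg _)
          (by linarith : ω / 2 ≤ π) habs
        rwa [Real.cos_abs] at this
      nlinarith [hkey, hcos2, mul_le_mul_of_nonneg_left hle hpos.le]
    · exact div_nonneg (by have := Real.cos_le_one (ω * x); linarith) hc.le
  · simp [div_self hc.ne']
  · simp
  · have h := (((Real.hasDerivAt_cos (ω * (1 - (1:ℝ)))).comp 1
        (((hasDerivAt_const (1:ℝ) (1:ℝ)).sub (hasDerivAt_id 1)).const_mul ω)).const_sub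
        1).div_const (1 - Real.cos ω)
    simp only [Function.comp, id_eq, Pi.sub_apply] at h
    rw [h.deriv]
    simp
  · simp [div_self hc.ne']
  · simp
  · have h := (((Real.hasDerivAt_cos (ω * (0:ℝ))).comp 0
        ((hasDerivAt_id (0:ℝ)).const_mul ω)).const_sub 1).div_const (1 - Real.cos ω)
    simp only [Function.comp, id_eq] at h
    rw [h.deriv]
    simp
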